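/- Let f: [0,1] → ℝ≥0 be integrable with v(x,y) = ∫ₓʸ f and ∫₀¹ f = 1, let n ≥ 2, s ∈ (0, 1/(n-1)), and r > 0. Define greedily: x₀ = 0, and for j = 1,…,n-1, let y_j be the leftmost point ≥ x_{j-1} with v(x_{j-1}, y_j) = r (if it exists) and set x_j = y_j + s. Then MMS^{n,s} ≥ r if and only if all points y₁,…,y_{n-1} exist, x_{n-1} ≤ 1, and v(x_{n-1}, 1) ≥ r. -/
import Mathlib


open MeasureTheory

noncomputable def cakeVal (f : ℝ → ℝ) (x y : ℝ) : ℝ := ∫ t in x..y, f t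

def isSepPartition (n : ℕ) (s : ℝ) (a b : ℕ → ℝ) : Prop :=
  0 ≤ a 0 ∧ (∀ j, j < n → a j ≤ b j) ∧ (∀ j, j + 1 < n → b j + s ≤ a (j + 1)) ∧ b (n - 1) ≤ 1

noncomputable def minValue (f : ℝ → ℝ) (n : ℕ) (a b : ℕ → ℝ) : ℝ :=
  ⨅ j : Fin n, cakeVal f (a (j : ℕ)) (b (j : ℕ))

noncomputable def MMScake (f : ℝ → ℝ) (n : ℕ) (s : ℝ) : ℝ :=
  sSup {m | ∃ a b : ℕ → ℝ, isSepPartition n s a b ∧ m = minValue f n a b}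

namespace Stmt15

/-- The primitive of `f` starting at `0`. -/
noncomputable def G (f : ℝ → ℝ) (t : ℝ) : ℝ := ∫ u in (0:ℝ)..t, f u

/-- The set of candidate cut points: points `z ∈ [t, 1]` where the value from `t` is at
least `r`. -/
def hitSet (f : ℝ → ℝ) (r t : ℝ) : Set ℝ := {z | t ≤ z ∧ z ≤ 1 ∧ G f t + r ≤ G f z}

/-- The greedy sequence of points. -/
noncomputable def greedy (f : ℝ → ℝ) (r s : ℝ) : ℕ → ℝ
  | 0 => 0
  | j + 1 => sInf (hitSet f r (greedy f r s j)) + s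

@[simp] lemma greedy_zero (f : ℝ → ℝ) (r s : ℝ) : greedy f r s 0 = 0 := rfl

lemma greedy_succ (f : ℝ → ℝ) (r s : ℝ) (j : ℕ) :
    greedy f r s (j + 1) = sInf (hitSet f r (greedy f r s j)) + s := rfl

variable {f : ℝ → ℝ}

lemma intInt (hfi : IntervalIntegrable f volume 0 1) {x y : ℝ}
    (hx : x ∈ Set.Icc (0:ℝ) 1) (hy : y ∈ Set.Icc (0:ℝ) 1) :
    IntervalIntegrable f volume x y := by
  apply hfi.mono_set
  rw [Set.uIcc_of_le (zero_le_one' ℝ)]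
  exact Set.uIcc_subset_Icc hx hy

lemma cakeVal_eq (hfi : IntervalIntegrable f volume 0 1) {x y : ℝ}
    (hx : x ∈ Set.Icc (0:ℝ) 1) (hy : y ∈ Set.Icc (0:ℝ) 1) :
    cakeVal f x y = G f y - G f x := by
  have h01 : (0:ℝ) ∈ Set.Icc (0:ℝ) 1 := ⟨le_rfl, zero_le_one⟩
  exact (intervalIntegral.integral_interval_sub_left (intInt hfi h01 hy)
    (intInt hfi h01 hx)).symm

lemma cakeVal_nonneg (hf0 : ∀ t, 0 ≤ f t) {x y : ℝ} (hxy : x ≤ y) :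
    0 ≤ cakeVal f x y :=
  intervalIntegral.integral_nonneg hxy fun u _ => hf0 u

lemma G_mono (hf0 : ∀ t, 0 ≤ f t) (hfi : IntervalIntegrable f volume 0 1) {x y : ℝ}
    (hx : x ∈ Set.Icc (0:ℝ) 1) (hy : y ∈ Set.Icc (0:ℝ) 1) (hxy : x ≤ y) :
    G f x ≤ G f y := by
  have h := cakeVal_nonneg hf0 hxy
  rw [cakeVal_eq hfi hx hy] at h
  linarith

lemma G_cont (hfi : IntervalIntegrable f volume 0 1) :
    ContinuousOn (G f) (Set.Icc (0:ℝ) 1) := by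
  have := intervalIntegral.continuousOn_primitive_interval' hfi
    (Set.left_mem_uIcc (a := (0:ℝ)) (b := 1))
  rwa [Set.uIcc_of_le (zero_le_one' ℝ)] at this

lemma G_zero : G f 0 = 0 := intervalIntegral.integral_same

lemma G_one (hf1 : cakeVal f 0 1 = 1) : G f 1 = 1 := hf1

/-- All the endpoints of a separated partition lie in `[0,1]`. -/
lemma part_bounds {n : ℕ} {s : ℝ} {a b : ℕ → ℝ} (hn : 1 ≤ n) (hs : 0 < s)
    (h : isSepPartition n s a b) : ∀ j, j < n → 0 ≤ a j ∧ a j ≤ b j ∧ b j ≤ 1 := by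
  obtain ⟨h0, hab, hsep, hlast⟩ := h
  have ha : ∀ j, j < n → 0 ≤ a j := by
    intro j
    induction j with
    | zero => intro _; exact h0
    | succ k ih =>
      intro hj
      have h1 := ih (by omega)
      have h2 := hsep k (by omega)
      have h3 := hab k (by omega)
      linarith
  have hbmono : ∀ k, k ≤ n - 1 → ∀ j, j ≤ k → b j ≤ b k := by
    intro k
    induction k with
    | zero =>
      intro _ j hj
      obtain rfl := Nat.le_zero.mp hj
      exact le_rfl
    | succ m ih =>
      intro hk j hj
      rcases Nat.eq_or_lt_of_le hj with rfl | hlt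
      · exact le_rfl
      · have h1 : b j ≤ b m := ih (by omega) j (by omega)
        have h2 := hsep m (by omega)
        have h3 := hab (m + 1) (by omega)
        linarith
  intro j hj
  have hb1 : b j ≤ 1 := le_trans (hbmono (n - 1) le_rfl j (by omega)) hlast
  exact ⟨ha j hj, hab j hj, hb1⟩

lemma minValue_le_piece {n : ℕ} (hf0 : ∀ t, 0 ≤ f t) {s : ℝ} {a b : ℕ → ℝ} (hn : 1 ≤ n)
    (hs : 0 < s) (hp : isSepPartition n s a b) (j : Fin n) :
    minValue f n a b ≤ cakeVal f (a (j : ℕ)) (b (j : ℕ)) := by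
  haveI : Nonempty (Fin n) := ⟨⟨0, by omega⟩⟩
  apply ciInf_le
  refine ⟨0, ?_⟩
  rintro _ ⟨i, rfl⟩
  exact cakeVal_nonneg hf0 (part_bounds hn hs hp i i.isLt).2.1

/-- Key step: existence, value, and minimality of the leftmost cut point. -/
lemma key_step (hf0 : ∀ t, 0 ≤ f t) (hfi : IntervalIntegrable f volume 0 1)
    {r t w : ℝ} (hr : 0 < r) (ht0 : 0 ≤ t) (htw : t ≤ w) (hw1 : w ≤ 1)
    (hGw : G f t + r ≤ G f w) :
    t ≤ sInf (hitSet f r t) ∧ sInf (hitSet f r t) ≤ w ∧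
      G f (sInf (hitSet f r t)) = G f t + r ∧
      ∀ z, t ≤ z → cakeVal f t z = r → sInf (hitSet f r t) ≤ z := by
  have hwS : w ∈ hitSet f r t := ⟨htw, hw1, hGw⟩
  have hbdd : BddBelow (hitSet f r t) := ⟨t, fun z hz => hz.1⟩
  have hset : hitSet f r t = Set.Icc t 1 ∩ G f ⁻¹' Set.Ici (G f t + r) := by
    ext z; simp [hitSet, Set.mem_Icc, and_assoc]
  have hclosed : IsClosed (hitSet f r t) := by
    rw [hset]
    exact ContinuousOn.preimage_isClosed_of_isClosed
      ((G_cont hfi).mono (Set.Icc_subset_Icc ht0 le_rfl)) isClosed_Icc isClosed_Ici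
  set y := sInf (hitSet f r t) with hy
  have hyS : y ∈ hitSet f r t := hclosed.csInf_mem ⟨w, hwS⟩ hbdd
  have hyw : y ≤ w := csInf_le hbdd hwS
  -- IVT gives a point with exact value
  obtain ⟨z0, hz0mem, hz0⟩ := intermediate_value_Icc htw
    ((G_cont hfi).mono (Set.Icc_subset_Icc ht0 hw1)) (⟨by linarith, hGw⟩ :
      G f t + r ∈ Set.Icc (G f t) (G f w))
  have hz0S : z0 ∈ hitSet f r t := ⟨hz0mem.1, hz0mem.2.trans hw1, hz0.ge⟩
  have hyz0 : y ≤ z0 := csInf_le hbdd hz0S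
  have hGy : G f y = G f t + r := by
    have h1 : G f y ≤ G f z0 :=
      G_mono hf0 hfi ⟨ht0.trans hyS.1, hyS.2.1⟩ ⟨ht0.trans hz0mem.1, hz0mem.2.trans hw1⟩ hyz0
    have h2 := hyS.2.2
    linarith [hz0 ▸ h1]
  refine ⟨hyS.1, hyw, hGy, ?_⟩
  intro z hz hzval
  by_cases hz1 : z ≤ 1
  · have : cakeVal f t z = G f z - G f t :=
      cakeVal_eq hfi ⟨ht0, htw.trans hw1⟩ ⟨ht0.trans hz, hz1⟩
    have hzS : z ∈ hitSet f r t := ⟨hz, hz1, by rw [this] at hzval; linarith⟩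
    exact csInf_le hbdd hzS
  · linarith [hyS.2.1]

/-- Continuity of a finite `inf'` of continuous functions. -/
lemma continuousOn_finset_inf' {X ι : Type*} [TopologicalSpace X] {s : Set X}
    {t : Finset ι} (ht : t.Nonempty) {g : ι → X → ℝ}
    (hg : ∀ i ∈ t, ContinuousOn (g i) s) :
    ContinuousOn (fun x => t.inf' ht fun i => g i x) s := by
  induction ht using Finset.Nonempty.cons_induction with
  | singleton i => simpa using hg i (by simp)
  | cons i u hiu hu ih =>
    have heq : (fun x => (Finset.cons i u hiu).inf' (Finset.cons_nonempty hiu) fun j => g j x) =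
        fun x => (g i x) ⊓ (u.inf' hu fun j => g j x) :=
      funext fun x => Finset.inf'_cons hu _
    rw [heq]
    exact ContinuousOn.inf (hg i (by simp)) (ih fun j hj => hg j (by simp [hj]))

/-- Padding a `Fin n`-indexed family to an `ℕ`-indexed one. -/
noncomputable def extF (n : ℕ) (hn : 0 < n) (g : Fin n → ℝ) (j : ℕ) : ℝ :=
  g ⟨min j (n - 1), by omega⟩

lemma extF_eq {n : ℕ} (hn : 0 < n) (g : Fin n → ℝ) (j : ℕ) (hj : j < n) :
    extF n hn g j = g ⟨j, hj⟩ := by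
  have h : min j (n - 1) = j := by omega
  exact congrArg g (Fin.ext h)

/-- `isSepPartition` only depends on the values below `n`. -/
lemma sep_congr {n : ℕ} {s : ℝ} {a b a' b' : ℕ → ℝ} (hn : 1 ≤ n)
    (ha : ∀ j, j < n → a j = a' j) (hb : ∀ j, j < n → b j = b' j)
    (h : isSepPartition n s a b) : isSepPartition n s a' b' := by
  obtain ⟨h0, hab, hsep, hlast⟩ := h
  refine ⟨?_, ?_, ?_, ?_⟩
  · rw [← ha 0 (by omega)]; exact h0
  · intro j hj; rw [← ha j hj, ← hb j hj]; exact hab j hj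
  · intro j hj; rw [← ha (j+1) hj, ← hb j (by omega)]; exact hsep j hj
  · rw [← hb (n-1) (by omega)]; exact hlast

lemma minValue_congr {n : ℕ} {a b a' b' : ℕ → ℝ}
    (ha : ∀ j, j < n → a j = a' j) (hb : ∀ j, j < n → b j = b' j) :
    minValue f n a b = minValue f n a' b' := by
  unfold minValue
  exact iInf_congr fun j => by rw [ha j j.isLt, hb j j.isLt]

end Stmt15

open Stmt15 in
/-- Greedy characterization of `MMS ≥ r`: starting at `x 0 = 0`, cut at the leftmost point
`y_{j+1} = x (j+1) - s` giving value exactly `r`, then skip a gap of length `s`. Then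
`MMS^{n,s} ≥ r` iff all the greedy points exist, `x (n-1) ≤ 1`, and the leftover piece
`[x (n-1), 1]` has value at least `r`. -/
theorem stmt_15 (n : ℕ) (hn : 2 ≤ n) (s : ℝ) (hs : 0 < s) (hs' : s < 1 / ((n : ℝ) - 1))
    (f : ℝ → ℝ) (hf0 : ∀ t, 0 ≤ f t)
    (hfi : IntervalIntegrable f volume 0 1)
    (hf1 : cakeVal f 0 1 = 1)
    (r : ℝ) (hr : 0 < r) :
    r ≤ MMScake f n s ↔
      ∃ x : ℕ → ℝ, x 0 = 0 ∧
        (∀ j, j + 1 ≤ n - 1 →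
          x j ≤ x (j + 1) - s ∧
          cakeVal f (x j) (x (j + 1) - s) = r ∧
          (∀ z, x j ≤ z → cakeVal f (x j) z = r → x (j + 1) - s ≤ z)) ∧
        x (n - 1) ≤ 1 ∧ r ≤ cakeVal f (x (n - 1)) 1 := by
  have hn0 : 0 < n := by omega
  have hn1 : 1 ≤ n := by omega
  haveI : Nonempty (Fin n) := ⟨⟨0, hn0⟩⟩
  have hmem01 : ∀ {u : ℝ}, 0 ≤ u → u ≤ 1 → u ∈ Set.Icc (0:ℝ) 1 := fun h1 h2 => ⟨h1, h2⟩
  set V := {m | ∃ a b : ℕ → ℝ, isSepPartition n s a b ∧ m = minValue f n a b} with hV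
  -- bound on any partition's min value
  have hminle1 : ∀ a b : ℕ → ℝ, isSepPartition n s a b → minValue f n a b ≤ 1 := by
    intro a b hp
    have hb := part_bounds hn1 hs hp 0 hn0
    calc minValue f n a b ≤ cakeVal f (a 0) (b 0) := by
          simpa using minValue_le_piece hf0 hn1 hs hp ⟨0, hn0⟩
      _ = G f (b 0) - G f (a 0) := cakeVal_eq hfi ⟨hb.1, hb.2.1.trans hb.2.2⟩
          ⟨hb.1.trans hb.2.1, hb.2.2⟩
      _ ≤ G f 1 - G f 0 := by
          have h1 := G_mono hf0 hfi (hmem01 (hb.1.trans hb.2.1) hb.2.2) ⟨zero_le_one, le_rfl⟩ hb.2.2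
          have h2 := G_mono hf0 hfi ⟨le_rfl, zero_le_one⟩ ⟨hb.1, hb.2.1.trans hb.2.2⟩ hb.1
          linarith
      _ = 1 := by rw [G_zero, G_one hf1]; ring
  have hVbdd : BddAbove V := by
    refine ⟨1, ?_⟩
    rintro m ⟨a, b, hp, rfl⟩
    exact hminle1 a b hp
  -- the trivial partition, showing V is nonempty
  have htriv : isSepPartition n s (fun j => ((min j (n-1) : ℕ) : ℝ) * s)
      (fun j => ((min j (n-1) : ℕ) : ℝ) * s) := by
    have hcast : ((n - 1 : ℕ) : ℝ) = (n : ℝ) - 1 := by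
      push_cast [Nat.cast_sub hn1]; ring
    have hlast : ((n - 1 : ℕ) : ℝ) * s ≤ 1 := by
      have hpos : (0:ℝ) < (n : ℝ) - 1 := by
        have : (2:ℝ) ≤ (n:ℝ) := by exact_mod_cast hn
        linarith
      have := (lt_div_iff₀ hpos).mp hs'
      rw [hcast]
      nlinarith
    refine ⟨?_, fun j _ => le_rfl, ?_, ?_⟩
    · exact mul_nonneg (Nat.cast_nonneg _) hs.le
    · intro j hj
      have h1 : min j (n-1) = j := by omega
      have h2 : min (j+1) (n-1) = j + 1 := by omega
      simp only [h1, h2]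
      push_cast
      have : ((j:ℝ) + 1) * s = (j:ℝ) * s + s := by ring
      linarith [this.le]
    · simp only [min_self]
      exact hlast
  have hVne : V.Nonempty :=
    ⟨_, _, _, htriv, rfl⟩
  constructor
  · -- hard direction : r ≤ MMS → greedy succeeds
    intro hMMS
    -- Attainment of the supremum via compactness
    obtain ⟨a, b, hpart, hge⟩ :
        ∃ a b : ℕ → ℝ, isSepPartition n s a b ∧ MMScake f n s ≤ minValue f n a b := by
      classical
      set K : Set ((Fin n → ℝ) × (Fin n → ℝ)) :=
        {q | isSepPartition n s (extF n hn0 q.1) (extF n hn0 q.2)} with hK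
      set Φ : (Fin n → ℝ) × (Fin n → ℝ) → ℝ :=
        fun q => ⨅ j : Fin n, (G f (extF n hn0 q.2 (j : ℕ)) - G f (extF n hn0 q.1 (j : ℕ)))
        with hΦ
      -- coordinates of members of K lie in [0,1]
      have hKbnd : ∀ q ∈ K, ∀ j : Fin n,
          0 ≤ q.1 j ∧ q.1 j ≤ q.2 j ∧ q.2 j ≤ 1 := by
        intro q hq j
        have := part_bounds hn1 hs hq (j : ℕ) j.isLt
        rwa [extF_eq hn0 q.1 _ j.isLt, extF_eq hn0 q.2 _ j.isLt, Fin.eta] at this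
      -- K is closed
      have hKclosed : IsClosed K := by
        have hrep : K = {q : (Fin n → ℝ) × (Fin n → ℝ) | 0 ≤ extF n hn0 q.1 0} ∩
            ((⋂ j : ℕ, {q | j < n → extF n hn0 q.1 j ≤ extF n hn0 q.2 j}) ∩
             ((⋂ j : ℕ, {q | j + 1 < n → extF n hn0 q.2 j + s ≤ extF n hn0 q.1 (j+1)}) ∩
              {q | extF n hn0 q.2 (n-1) ≤ 1})) := by
          ext q
          simp only [hK, Set.mem_setOf_eq, Set.mem_inter_iff, Set.mem_iInter, isSepPartition]
        rw [hrep]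
        have hc1 : ∀ j : ℕ, Continuous fun q : (Fin n → ℝ) × (Fin n → ℝ) => extF n hn0 q.1 j :=
          fun j => (continuous_apply _).comp continuous_fst
        have hc2 : ∀ j : ℕ, Continuous fun q : (Fin n → ℝ) × (Fin n → ℝ) => extF n hn0 q.2 j :=
          fun j => (continuous_apply _).comp continuous_snd
        refine IsClosed.inter (isClosed_le continuous_const (hc1 0)) (IsClosed.inter ?_
          (IsClosed.inter ?_ (isClosed_le (hc2 (n-1)) continuous_const)))
        · refine isClosed_iInter fun j => ?_
          by_cases hj : j < n
          · simp only [hj, true_implies]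
            exact isClosed_le (hc1 j) (hc2 j)
          · have : {q : (Fin n → ℝ) × (Fin n → ℝ) | j < n → extF n hn0 q.1 j ≤ extF n hn0 q.2 j}
                = Set.univ := by ext q; simp [hj]
            rw [this]; exact isClosed_univ
        · refine isClosed_iInter fun j => ?_
          by_cases hj : j + 1 < n
          · simp only [hj, true_implies]
            exact isClosed_le ((hc2 j).add continuous_const) (hc1 (j+1))
          · have : {q : (Fin n → ℝ) × (Fin n → ℝ) |
                j + 1 < n → extF n hn0 q.2 j + s ≤ extF n hn0 q.1 (j+1)} = Set.univ := by
              ext q; simp [hj]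
            rw [this]; exact isClosed_univ
      -- K is compact
      have hKcpt : IsCompact K := by
        refine IsCompact.of_isClosed_subset (isCompact_Icc
          (a := ((fun _ => 0, fun _ => 0) : (Fin n → ℝ) × (Fin n → ℝ)))
          (b := ((fun _ => 1, fun _ => 1) : (Fin n → ℝ) × (Fin n → ℝ)))) hKclosed ?_
        intro q hq
        have hb := hKbnd q hq
        constructor
        · constructor
          · intro j; exact (hb j).1
          · intro j; exact le_trans (hb j).1 (hb j).2.1
        · constructor
          · intro j; exact le_trans (hb j).2.1 (hb j).2.2
          · intro j; exact (hb j).2.2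
      -- K is nonempty
      have hKne : K.Nonempty := by
        refine ⟨(fun j : Fin n => ((min (j:ℕ) (n-1) : ℕ) : ℝ) * s,
                 fun j : Fin n => ((min (j:ℕ) (n-1) : ℕ) : ℝ) * s), ?_⟩
        have hext : ∀ j : ℕ, extF n hn0 (fun i : Fin n => ((min (i:ℕ) (n-1) : ℕ) : ℝ) * s) j
            = ((min j (n-1) : ℕ) : ℝ) * s := by
          intro j
          show ((min (min j (n-1)) (n-1) : ℕ) : ℝ) * s = ((min j (n-1) : ℕ) : ℝ) * s
          congr 2
          omega
        refine sep_congr hn1 (fun j _ => (hext j).symm) (fun j _ => (hext j).symm) htriv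
      -- Φ is continuous on K
      have hΦcont : ContinuousOn Φ K := by
        have hrw : ∀ q : (Fin n → ℝ) × (Fin n → ℝ), Φ q = Finset.univ.inf'
            Finset.univ_nonempty
            (fun j : Fin n => G f (extF n hn0 q.2 (j:ℕ)) - G f (extF n hn0 q.1 (j:ℕ))) := by
          intro q
          rw [hΦ]
          exact (Finset.inf'_univ_eq_ciInf _).symm
        rw [show Φ = fun q => Finset.univ.inf' Finset.univ_nonempty
            (fun j : Fin n => G f (extF n hn0 q.2 (j:ℕ)) - G f (extF n hn0 q.1 (j:ℕ)))
          from funext hrw]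
        refine continuousOn_finset_inf' Finset.univ_nonempty ?_
        intro j _
        have hmaps1 : Set.MapsTo (fun q : (Fin n → ℝ) × (Fin n → ℝ) => extF n hn0 q.1 (j:ℕ)) K
            (Set.Icc (0:ℝ) 1) := by
          intro q hq
          have hb := (hKbnd q hq j)
          show extF n hn0 q.1 (j:ℕ) ∈ Set.Icc (0:ℝ) 1
          rw [extF_eq hn0 q.1 _ j.isLt, Fin.eta]
          exact ⟨hb.1, hb.2.1.trans hb.2.2⟩
        have hmaps2 : Set.MapsTo (fun q : (Fin n → ℝ) × (Fin n → ℝ) => extF n hn0 q.2 (j:ℕ)) K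
            (Set.Icc (0:ℝ) 1) := by
          intro q hq
          have hb := (hKbnd q hq j)
          show extF n hn0 q.2 (j:ℕ) ∈ Set.Icc (0:ℝ) 1
          rw [extF_eq hn0 q.2 _ j.isLt, Fin.eta]
          exact ⟨hb.1.trans hb.2.1, hb.2.2⟩
        exact ContinuousOn.sub
          ((G_cont hfi).comp (((continuous_apply _).comp continuous_snd).continuousOn) hmaps2)
          ((G_cont hfi).comp (((continuous_apply _).comp continuous_fst).continuousOn) hmaps1)
      obtain ⟨q, hqK, hqmax⟩ := hKcpt.exists_isMaxOn hKne hΦcont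
      -- Φ equals the min value on K
      have hΦval : ∀ p ∈ K, Φ p = minValue f n (extF n hn0 p.1) (extF n hn0 p.2) := by
        intro p hp
        rw [hΦ]
        unfold minValue
        refine iInf_congr fun j => ?_
        have hb := part_bounds hn1 hs hp (j:ℕ) j.isLt
        rw [cakeVal_eq hfi ⟨hb.1, hb.2.1.trans hb.2.2⟩ ⟨hb.1.trans hb.2.1, hb.2.2⟩]
      refine ⟨extF n hn0 q.1, extF n hn0 q.2, hqK, ?_⟩
      rw [← hΦval q hqK]
      refine csSup_le hVne ?_
      rintro m ⟨a, b, hp, rfl⟩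
      set p : (Fin n → ℝ) × (Fin n → ℝ) := (fun j => a (j:ℕ), fun j => b (j:ℕ)) with hp'
      have hagree1 : ∀ j, j < n → a j = extF n hn0 p.1 j := by
        intro j hj; rw [extF_eq hn0 p.1 j hj]
      have hagree2 : ∀ j, j < n → b j = extF n hn0 p.2 j := by
        intro j hj; rw [extF_eq hn0 p.2 j hj]
      have hpK : p ∈ K := sep_congr hn1 hagree1 hagree2 hp
      calc minValue f n a b = Φ p := by
            rw [hΦval p hpK]; exact minValue_congr hagree1 hagree2
        _ ≤ Φ q := hqmax hpK
    have hrmin : r ≤ minValue f n a b := le_trans hMMS hge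
    have hbnd := part_bounds hn1 hs hpart
    have hpiece : ∀ j : Fin n, r ≤ cakeVal f (a (j:ℕ)) (b (j:ℕ)) := fun j =>
      le_trans hrmin (minValue_le_piece hf0 hn1 hs hpart j)
    set x : ℕ → ℝ := greedy f r s with hx
    -- one greedy step
    have step : ∀ j, j < n → 0 ≤ x j → x j ≤ a j →
        x j ≤ x (j+1) - s ∧ x (j+1) - s ≤ b j ∧
        G f (x (j+1) - s) = G f (x j) + r ∧
        (∀ z, x j ≤ z → cakeVal f (x j) z = r → x (j+1) - s ≤ z) := by
      intro j hjn hx0 hxa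
      obtain ⟨ha0, hab, hb1⟩ := hbnd j hjn
      have hxw : x j ≤ b j := hxa.trans hab
      have hx1 : x j ≤ 1 := hxw.trans hb1
      have hGw : G f (x j) + r ≤ G f (b j) := by
        have h1 := hpiece ⟨j, hjn⟩
        rw [cakeVal_eq hfi ⟨ha0, hab.trans hb1⟩ ⟨ha0.trans hab, hb1⟩] at h1
        have h2 : G f (x j) ≤ G f (a j) :=
          G_mono hf0 hfi ⟨hx0, hx1⟩ ⟨ha0, hab.trans hb1⟩ hxa
        linarith
      have hdef : x (j+1) - s = sInf (hitSet f r (x j)) := by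
        rw [hx, greedy_succ]; ring
      obtain ⟨h1, h2, h3, h4⟩ := key_step hf0 hfi hr hx0 hxw hb1 hGw
      rw [hdef]
      exact ⟨h1, h2, h3, h4⟩
    -- invariant
    have inv : ∀ j, j ≤ n - 1 → 0 ≤ x j ∧ x j ≤ a j := by
      intro j
      induction j with
      | zero => intro _; exact ⟨le_rfl, hpart.1⟩
      | succ k ih =>
        intro hj
        obtain ⟨h0, ha⟩ := ih (by omega)
        obtain ⟨h1, h2, _, _⟩ := step k (by omega) h0 ha
        refine ⟨by linarith, ?_⟩
        have hsep := hpart.2.2.1 k (by omega)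
        linarith
    refine ⟨x, rfl, ?_, ?_, ?_⟩
    · intro j hj
      obtain ⟨h0, ha⟩ := inv j (by omega)
      obtain ⟨h1, h2, h3, h4⟩ := step j (by omega) h0 ha
      obtain ⟨ha0, hab, hb1⟩ := hbnd j (by omega)
      refine ⟨h1, ?_, h4⟩
      rw [cakeVal_eq hfi ⟨h0, (ha.trans hab).trans hb1⟩
        ⟨h0.trans h1, h2.trans hb1⟩, h3]
      ring
    · obtain ⟨h0, ha⟩ := inv (n-1) le_rfl
      obtain ⟨_, hab, hb1⟩ := hbnd (n-1) (by omega)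
      linarith
    · obtain ⟨h0, ha⟩ := inv (n-1) le_rfl
      obtain ⟨ha0, hab, hb1⟩ := hbnd (n-1) (by omega)
      have hx1 : x (n-1) ≤ 1 := by linarith
      rw [cakeVal_eq hfi ⟨h0, hx1⟩ ⟨le_rfl.trans zero_le_one, le_rfl⟩]
      have h1 := hpiece ⟨n-1, by omega⟩
      rw [cakeVal_eq hfi ⟨ha0, hab.trans hb1⟩ ⟨ha0.trans hab, hb1⟩] at h1
      have h2 : G f (x (n-1)) ≤ G f (a (n-1)) :=
        G_mono hf0 hfi ⟨h0, hx1⟩ ⟨ha0, hab.trans hb1⟩ ha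
      have h3 : G f (b (n-1)) ≤ G f 1 :=
        G_mono hf0 hfi ⟨ha0.trans hab, hb1⟩ ⟨zero_le_one, le_rfl⟩ hb1
      linarith
  · -- easy direction : greedy succeeds → r ≤ MMS
    rintro ⟨x, hx0, hstep, hxn1, hleft⟩
    have hpart : isSepPartition n s x (fun j => if j = n - 1 then 1 else x (j+1) - s) := by
      refine ⟨le_of_eq hx0.symm, ?_, ?_, ?_⟩
      · intro j hj
        by_cases hje : j = n - 1
        · simp only [hje, if_true]
          exact hxn1
        · simp only [hje, if_false]
          exact (hstep j (by omega)).1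
      · intro j hj
        have hje : j ≠ n - 1 := by omega
        simp only [hje, if_false]
        have h : x (j+1) - s + s = x (j+1) := by ring
        rw [h]
      · simp
    have hrle : r ≤ minValue f n x (fun j => if j = n - 1 then 1 else x (j+1) - s) := by
      refine le_ciInf fun j => ?_
      by_cases hje : (j : ℕ) = n - 1
      · simp only [hje, if_true]
        exact hleft
      · have hj1 : (j:ℕ) + 1 ≤ n - 1 := by have := j.isLt; omega
        simp only [hje, if_false]
        exact le_of_eq ((hstep (j:ℕ) hj1).2.1).symm
    exact le_trans hrle (le_csSup hVbdd ⟨_, _, hpart, rfl⟩)
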